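/- Let J₀, J₁ be complex structures on a real Hilbert space H forming a Fredholm pair (‖π(J₀-J₁)‖ < 2 in the Calkin algebra), and set T₀ = (J₀+J₁)/2, T₁ = (J₀-J₁)/2. For 0 < λ < 1, let X_λ be the range of the spectral projection χ_{(0,λ²)}(-T₀²). Then T₁ is invertible on X_λ, the operator J₀T₁T₀ is skew-adjoint and anti-commutes with J₀, and X_λ is invariant under T₁T₀. -/

import Mathlib

lemma anticomm_aux {R : Type*} [Ring R] {s t : R} (h : s*t = -(t*s)) :
    s*(t*t) = (t*t)*s ∧ t*(s*s) = (s*s)*t ∧ (t*s)*(s*s) = (s*s)*(t*s) ∧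
    s*(t*(s+t)) = (s+t)*t*s ∧ ((s+t)*t*s)*(s+t) = -((s+t)*((s+t)*t*s)) := by
  have h' : t*s = -(s*t) := by rw [h, neg_neg]
  have p1 : s*(t*t) = (t*t)*s := by
    calc s*(t*t) = (s*t)*t := by rw [mul_assoc]
    _ = -((t*s)*t) := by rw [h, neg_mul]
    _ = -(t*(s*t)) := by rw [mul_assoc]
    _ = t*(t*s) := by rw [h, mul_neg, neg_neg]
    _ = (t*t)*s := by rw [mul_assoc]
  have p2 : t*(s*s) = (s*s)*t := by
    calc t*(s*s) = (t*s)*s := by rw [mul_assoc]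
    _ = -((s*t)*s) := by rw [h', neg_mul]
    _ = -(s*(t*s)) := by rw [mul_assoc]
    _ = s*(s*t) := by rw [h', mul_neg, neg_neg]
    _ = (s*s)*t := by rw [mul_assoc]
  have p3 : (t*s)*(s*s) = (s*s)*(t*s) := by
    calc (t*s)*(s*s) = t*(s*(s*s)) := by rw [mul_assoc]
    _ = t*((s*s)*s) := by rw [← mul_assoc s s s]
    _ = (t*(s*s))*s := by rw [← mul_assoc]
    _ = ((s*s)*t)*s := by rw [p2]
    _ = (s*s)*(t*s) := by rw [mul_assoc]
  have p4 : s*(t*(s+t)) = (s+t)*t*s := by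
    have e1 : s*(t*(s+t)) = s*(t*s) + s*(t*t) := by rw [mul_add, mul_add]
    have e2 : (s+t)*t*s = s*(t*s) + (t*t)*s := by
      rw [add_mul, add_mul, mul_assoc]
    rw [e1, e2, p1]
  have p3' : (t*s)*(s+t) = -((s+t)*(t*s)) := by
    have a1 : (t*s)*t = -((t*t)*s) := by rw [mul_assoc, h, mul_neg, ← mul_assoc]
    have a2 : s*(t*s) = -((t*s)*s) := by rw [← mul_assoc, h, neg_mul]
    have a3 : (s+t)*(t*s) = -((t*s)*s) + (t*t)*s := by rw [add_mul, a2, ← mul_assoc]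
    rw [mul_add, a1, a3]; abel
  have p5 : ((s+t)*t*s)*(s+t) = -((s+t)*((s+t)*t*s)) := by
    calc ((s+t)*t*s)*(s+t) = ((s+t)*(t*s))*(s+t) := by rw [← mul_assoc]
    _ = (s+t)*((t*s)*(s+t)) := by rw [mul_assoc]
    _ = (s+t)*(-((s+t)*(t*s))) := by rw [p3']
    _ = -((s+t)*((s+t)*(t*s))) := by rw [mul_neg]
    _ = -((s+t)*((s+t)*t*s)) := by rw [mul_assoc (s+t) t s]
  exact ⟨p1, p2, p3, p4, p5⟩

set_option maxHeartbeats 1000000 in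
set_option synthInstance.maxHeartbeats 400000 in
/-- For a Fredholm pair of complex structures `(J₀, J₁)` on a real Hilbert space,
with `T₀ = (J₀+J₁)/2`, `T₁ = (J₀-J₁)/2` and `0 < λ < 1`, let `E` be the spectral projection
`χ_{(0,λ²)}(-T₀²)` (encoded: `E` is a self-adjoint idempotent lying in the double commutant of
`T₀² = -T₀*T₀`, on whose range `‖T₀x‖ ≤ λ‖x‖` and `T₀` is injective), and let
`X_λ = ran E`. Then `X_λ` is invariant under `T₁T₀`, the operator `J₀T₁T₀` is skew-adjoint
and anti-commutes with `J₀`, and `T₁` restricts to a bijection of `X_λ`. -/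
theorem stmt8 {H : Type*} [NormedAddCommGroup H] [InnerProductSpace ℝ H] [CompleteSpace H]
    (J₀ J₁ T₀ T₁ E : H →L[ℝ] H)
    (h₀a : ContinuousLinearMap.adjoint J₀ = -J₀) (h₀s : J₀ * J₀ = -1)
    (h₁a : ContinuousLinearMap.adjoint J₁ = -J₁) (h₁s : J₁ * J₁ = -1)
    (hT₀ : T₀ = (1 / 2 : ℝ) • (J₀ + J₁)) (hT₁ : T₁ = (1 / 2 : ℝ) • (J₀ - J₁))
    (hCalkin : ∃ K : H →L[ℝ] H, IsCompactOperator ⇑K ∧ ‖J₀ - J₁ - K‖ < 2)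
    (lam : ℝ) (hlam0 : 0 < lam) (hlam1 : lam < 1)
    (hEsa : ContinuousLinearMap.adjoint E = E) (hE2 : E * E = E)
    (hEbicomm : ∀ S : H →L[ℝ] H, S * (T₀ * T₀) = (T₀ * T₀) * S → S * E = E * S)
    (hEupper : ∀ x : H, ‖T₀ (E x)‖ ≤ lam * ‖E x‖)
    (hEinj : ∀ x : H, E x ≠ 0 → T₀ (E x) ≠ 0) :
    (∀ x ∈ LinearMap.range (E : H →ₗ[ℝ] H), (T₁ * T₀) x ∈ LinearMap.range (E : H →ₗ[ℝ] H)) ∧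
    ContinuousLinearMap.adjoint (J₀ * T₁ * T₀) = -(J₀ * T₁ * T₀) ∧
    (J₀ * T₁ * T₀) * J₀ = -(J₀ * (J₀ * T₁ * T₀)) ∧
    ∃ h : ∀ x ∈ LinearMap.range (E : H →ₗ[ℝ] H), T₁ x ∈ LinearMap.range (E : H →ₗ[ℝ] H),
      Function.Bijective ((T₁ : H →ₗ[ℝ] H).restrict h) := by
  -- express J's in terms of T's
  have hJ₀ : J₀ = T₀ + T₁ := by rw [hT₀, hT₁]; module
  have hJ₁ : J₁ = T₀ - T₁ := by rw [hT₀, hT₁]; module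
  have A1 : (T₀+T₁)*(T₀+T₁) = -1 := by rw [← hJ₀]; exact h₀s
  have A2 : (T₀-T₁)*(T₀-T₁) = -1 := by rw [← hJ₁]; exact h₁s
  -- key algebraic relations
  have k2 : T₀*T₀ + T₁*T₁ = -1 := by
    have h2 : (2:ℝ) • (T₀*T₀ + T₁*T₁) = (2:ℝ) • (-1 : H →L[ℝ] H) := by
      rw [two_smul, two_smul]
      calc T₀*T₀+T₁*T₁ + (T₀*T₀+T₁*T₁) = (T₀+T₁)*(T₀+T₁) + (T₀-T₁)*(T₀-T₁) := by
            noncomm_ring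
      _ = -1 + -1 := by rw [A1, A2]
    exact smul_right_injective (H →L[ℝ] H) two_ne_zero h2
  have k0 : T₀*T₁ + T₁*T₀ = 0 := by
    have h3 : (2:ℝ) • (T₀*T₁ + T₁*T₀) = (2:ℝ) • (0 : H →L[ℝ] H) := by
      rw [two_smul, smul_zero]
      calc T₀*T₁+T₁*T₀ + (T₀*T₁+T₁*T₀) = (T₀+T₁)*(T₀+T₁) - (T₀-T₁)*(T₀-T₁) := by
            noncomm_ring
      _ = -1 - -1 := by rw [A1, A2]
      _ = 0 := by abel
    exact smul_right_injective (H →L[ℝ] H) two_ne_zero h3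
  have k1 : T₀*T₁ = -(T₁*T₀) := eq_neg_of_add_eq_zero_left k0
  obtain ⟨p1, p2, p3, p4, p5⟩ := anticomm_aux k1
  -- commutation with E
  have cT₁E : T₁ * E = E * T₁ := hEbicomm T₁ p2
  have cT₀E : T₀ * E = E * T₀ := hEbicomm T₀ (mul_assoc T₀ T₀ T₀).symm
  have cTTE : (T₁*T₀) * E = E * (T₁*T₀) := hEbicomm _ p3
  have hmem : ∀ x : H, x ∈ LinearMap.range (E : H →ₗ[ℝ] H) ↔ E x = x := by
    intro x
    constructor
    · rintro ⟨y, rfl⟩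
      have := ContinuousLinearMap.ext_iff.1 hE2 y
      simpa [ContinuousLinearMap.mul_apply] using this
    · intro hx; exact ⟨x, hx⟩
  have invOf : ∀ (S : H →L[ℝ] H), S * E = E * S → ∀ x ∈ LinearMap.range (E : H →ₗ[ℝ] H),
      S x ∈ LinearMap.range (E : H →ₗ[ℝ] H) := by
    intro S hS x hx
    rw [hmem] at hx ⊢
    have := ContinuousLinearMap.ext_iff.1 hS x
    simp only [ContinuousLinearMap.mul_apply] at this
    rw [← this, hx]
  refine ⟨invOf _ cTTE, ?_, ?_, ?_⟩
  · -- skew-adjointness of J₀T₁T₀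
    have sJ₀ : star J₀ = -J₀ := by rw [ContinuousLinearMap.star_eq_adjoint, h₀a]
    have sJ₁ : star J₁ = -J₁ := by rw [ContinuousLinearMap.star_eq_adjoint, h₁a]
    have sT₀ : star T₀ = -T₀ := by
      rw [hT₀, star_smul, star_add, sJ₀, sJ₁, star_trivial]; module
    have sT₁ : star T₁ = -T₁ := by
      rw [hT₁, star_smul, star_sub, sJ₀, sJ₁, star_trivial]; module
    rw [← ContinuousLinearMap.star_eq_adjoint, star_mul, star_mul, sT₀, sT₁, sJ₀]
    simp only [neg_mul, mul_neg, neg_neg, neg_inj]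
    rw [hJ₀]
    exact p4
  · -- anticommutation with J₀
    rw [hJ₀]
    exact p5
  · -- T₁ restricts to a bijection
    have hT₁mem := invOf _ cT₁E
    have hT₀mem := invOf _ cT₀E
    refine ⟨hT₁mem, ?_⟩
    -- the range of E is closed, hence complete
    have hclosed : IsClosed ((LinearMap.range (E : H →ₗ[ℝ] H) : Submodule ℝ H) : Set H) := by
      have : ((LinearMap.range (E : H →ₗ[ℝ] H) : Submodule ℝ H) : Set H) =
          (⇑(E - (1 : H →L[ℝ] H)) ⁻¹' {0}) := by
        ext x
        simp only [SetLike.mem_coe, Set.mem_preimage, Set.mem_singleton_iff, hmem,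
          ContinuousLinearMap.sub_apply, ContinuousLinearMap.one_apply, sub_eq_zero]
      rw [this]
      exact IsClosed.preimage (E - 1).continuous isClosed_singleton
    haveI : CompleteSpace (LinearMap.range (E : H →ₗ[ℝ] H) : Submodule ℝ H) :=
      hclosed.completeSpace_coe
    -- the restriction of T₀² to the range of E, as a continuous linear map
    have hSmem : ∀ x ∈ LinearMap.range (E : H →ₗ[ℝ] H), (T₀*T₀) x ∈ LinearMap.range (E : H →ₗ[ℝ] H) := by
      intro x hx
      exact hT₀mem _ (hT₀mem _ hx)
    set p : Submodule ℝ H := LinearMap.range (E : H →ₗ[ℝ] H) with hp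
    let A : p →L[ℝ] p :=
      { toLinearMap := ((T₀*T₀ : H →L[ℝ] H) : H →ₗ[ℝ] H).restrict hSmem,
        cont := by
          exact Continuous.subtype_mk ((T₀*T₀).continuous.comp continuous_subtype_val) _ }
    have hAcoe : ∀ x : p, (A x : H) = T₀ (T₀ (x : H)) := fun x => rfl
    have hAnorm : ‖A‖ ≤ lam * lam := by
      refine ContinuousLinearMap.opNorm_le_bound A (mul_nonneg hlam0.le hlam0.le) ?_
      intro x
      have hx1 : E (x : H) = (x : H) := (hmem _).1 x.2
      have hx3 : E (T₀ (x : H)) = T₀ (x : H) := (hmem _).1 (hT₀mem _ x.2)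
      have hnx : ‖A x‖ = ‖T₀ (T₀ (x : H))‖ := by rw [← hAcoe]; rfl
      rw [hnx]
      calc ‖T₀ (T₀ (x:H))‖ = ‖T₀ (E (T₀ (x:H)))‖ := by rw [hx3]
      _ ≤ lam * ‖E (T₀ (x:H))‖ := hEupper _
      _ = lam * ‖T₀ (E (x:H))‖ := by rw [hx3, hx1]
      _ ≤ lam * (lam * ‖E (x:H)‖) := by
          exact mul_le_mul_of_nonneg_left (hEupper _) hlam0.le
      _ = lam * lam * ‖(x:H)‖ := by rw [hx1]; ring
      _ = lam * lam * ‖x‖ := rfl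
    have hunit : ‖-A‖ < 1 := by
      calc ‖-A‖ = ‖A‖ := norm_neg A
      _ ≤ lam * lam := hAnorm
      _ < 1 := by nlinarith
    set u : (p →L[ℝ] p)ˣ := Units.oneSub (-A) hunit with hu
    have huval : (u : p →L[ℝ] p) = 1 - -A := rfl
    have hBbij : Function.Bijective ⇑((1 : p →L[ℝ] p) - -A) := by
      rw [← huval]
      refine Function.bijective_iff_has_inverse.mpr ⟨⇑((u⁻¹ : (p →L[ℝ] p)ˣ) : p →L[ℝ] p),
        fun x => ?_, fun x => ?_⟩
      · have h1 := ContinuousLinearMap.ext_iff.1 u.inv_mul x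
        rw [ContinuousLinearMap.mul_apply, ContinuousLinearMap.one_apply] at h1
        exact h1
      · have h1 := ContinuousLinearMap.ext_iff.1 u.mul_inv x
        rw [ContinuousLinearMap.mul_apply, ContinuousLinearMap.one_apply] at h1
        exact h1
    set f := (T₁ : H →ₗ[ℝ] H).restrict hT₁mem with hf
    have hfcoe : ∀ x : p, (f x : H) = T₁ (x : H) := fun x => rfl
    have key : ∀ x : p, f (f x) = -(((1 : p →L[ℝ] p) - -A) x) := by
      intro x
      apply Subtype.ext
      have hk := ContinuousLinearMap.ext_iff.1 k2 (x : H)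
      simp only [ContinuousLinearMap.add_apply, ContinuousLinearMap.mul_apply,
        ContinuousLinearMap.neg_apply, ContinuousLinearMap.one_apply] at hk
      have hl : (f (f x) : H) = T₁ (T₁ (x : H)) := rfl
      have hrhs : ((((1 : p →L[ℝ] p) - -A) x : p) : H) = (x:H) + T₀ (T₀ (x:H)) := by
        have h1 : (((1 : p →L[ℝ] p) - -A) x) = x - -(A x) := by
          rw [ContinuousLinearMap.sub_apply, ContinuousLinearMap.neg_apply,
            ContinuousLinearMap.one_apply]
        rw [h1, Submodule.coe_sub, Submodule.coe_neg, hAcoe]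
        abel
      rw [hl, Submodule.coe_neg, hrhs]
      calc T₁ (T₁ (x:H)) = (T₀ (T₀ (x:H)) + T₁ (T₁ (x:H))) - T₀ (T₀ (x:H)) := by abel
      _ = -(x:H) - T₀ (T₀ (x:H)) := by rw [hk]
      _ = -((x:H) + T₀ (T₀ (x:H))) := by abel
    have hcomp : Function.Bijective (⇑f ∘ ⇑f) := by
      have hfun : (⇑f ∘ ⇑f) = (fun y : p => -y) ∘ ⇑((1 : p →L[ℝ] p) - -A) := by
        funext x; exact key x
      rw [hfun]
      exact Function.Bijective.comp neg_involutive.bijective hBbij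
    exact ⟨Function.Injective.of_comp hcomp.injective,
      Function.Surjective.of_comp hcomp.surjective⟩
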